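/- Fix λ > 0 and h ≥ 0 and a constant c > 0. Then lim_{n→∞} (log n)²/n · ∑_{i : i − c·b_n² ≥ h·b_n²/log n} exp(−(λ/c)·((log n)²/n)·(i − c·b_n²)) = (c/λ)·e^{−λh/c}, where the sum is over integers i with c·b_n² ≤ i ≤ n and b_n² ~ n/log n. -/

import Mathlib

open Filter Real

private lemma aux_ratio : Tendsto (fun x : ℝ => (Real.exp (-x) - 1) / x) (nhdsWithin 0 {0}ᶜ) (nhds (-1)) := by
  have hder : HasDerivAt (fun x : ℝ => Real.exp (-x)) (-1) 0 := by
    simpa using (hasDerivAt_neg (0:ℝ)).exp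
  have := hasDerivAt_iff_tendsto_slope.1 hder
  refine this.congr fun x => ?_
  simp [slope_def_field]

private lemma aux_main (A T β : ℕ → ℝ) (d : ℝ)
    (hA0 : ∀ᶠ n in atTop, 0 < A n)
    (hA : Tendsto A atTop (nhds 0))
    (hT0 : ∀ᶠ n in atTop, 0 ≤ T n)
    (hTβ : ∀ᶠ n in atTop, β n ≤ T n)
    (hTn : ∀ᶠ n in atTop, T n + 1 ≤ n)
    (htail : Tendsto (fun n => A n * ((n : ℝ) - T n)) atTop atTop)
    (hd : Tendsto (fun n => A n * (T n - β n)) atTop (nhds d)) :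
    Tendsto (fun n => A n * ∑ i ∈ Finset.Icc ⌈T n⌉₊ n, Real.exp (-(A n) * ((i:ℝ) - β n)))
      atTop (nhds (Real.exp (-d))) := by
  -- G1 : A/(1 - exp(-A)) → 1
  have hAne : Tendsto A atTop (nhdsWithin 0 {0}ᶜ) := by
    rw [tendsto_nhdsWithin_iff]
    exact ⟨hA, hA0.mono fun n hn => by simpa using ne_of_gt hn⟩
  have h3 : Tendsto (fun n => (Real.exp (-A n) - 1) / A n) atTop (nhds (-1)) :=
    aux_ratio.comp hAne
  have G1 : Tendsto (fun n => A n / (1 - Real.exp (-A n))) atTop (nhds 1) := by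
    have := (h3.inv₀ (by norm_num)).neg
    norm_num at this
    refine this.congr fun n => ?_
    rw [← div_neg, neg_sub]
  -- G2 : exp(-A(⌈T⌉ - β)) → exp(-d)
  have hz : Tendsto (fun n => A n * ((⌈T n⌉₊ : ℝ) - T n)) atTop (nhds 0) := by
    refine squeeze_zero' ?_ ?_ hA
    · filter_upwards [hA0] with n h0
      exact mul_nonneg h0.le (by linarith [Nat.le_ceil (T n)])
    · filter_upwards [hA0, hT0] with n h0 h1
      have := Nat.ceil_lt_add_one h1
      nlinarith
  have G2' : Tendsto (fun n => A n * ((⌈T n⌉₊ : ℝ) - β n)) atTop (nhds d) := by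
    have := hz.add hd
    rw [zero_add] at this
    exact this.congr fun n => by ring
  have G2 : Tendsto (fun n => Real.exp (-(A n) * ((⌈T n⌉₊ : ℝ) - β n))) atTop (nhds (Real.exp (-d))) :=
    (Real.continuous_exp.tendsto _).comp G2'.neg |>.congr fun n => by simp [neg_mul]
  -- G3 : 1 - r^(n+1-m) → 1
  have htail0 : Tendsto (fun n => Real.exp (-(A n * ((n:ℝ) - T n)))) atTop (nhds 0) :=
    Real.tendsto_exp_atBot.comp (tendsto_neg_atBot_iff.2 htail)
  have hpowz : Tendsto (fun n => Real.exp (-A n) ^ (n + 1 - ⌈T n⌉₊)) atTop (nhds 0) := by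
    refine squeeze_zero' (.of_forall fun n => by positivity) ?_ htail0
    filter_upwards [hA0, hT0, hTn] with n h0 h1 h2
    have hm1 : (⌈T n⌉₊ : ℝ) < T n + 1 := Nat.ceil_lt_add_one h1
    have hmn : ⌈T n⌉₊ ≤ n + 1 := by
      rw [Nat.ceil_le]; push_cast; linarith
    rw [← Real.exp_nat_mul]
    apply Real.exp_le_exp.2
    have hcast : ((n + 1 - ⌈T n⌉₊ : ℕ) : ℝ) = (n : ℝ) + 1 - ⌈T n⌉₊ := by
      push_cast [Nat.cast_sub hmn]; ring
    rw [hcast]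
    nlinarith
  have G3 : Tendsto (fun n => 1 - Real.exp (-A n) ^ (n + 1 - ⌈T n⌉₊)) atTop (nhds 1) := by
    have := (tendsto_const_nhds (x := (1:ℝ)) (f := atTop)).sub hpowz
    simpa using this
  -- combine
  have hfinal := (G1.mul G2).mul G3
  rw [one_mul, mul_one] at hfinal
  refine hfinal.congr' ?_
  filter_upwards [hA0, hT0, hTβ, hTn] with n h0 h1 h2 h3'
  set m := ⌈T n⌉₊ with hm
  set r := Real.exp (-A n) with hr
  have hr1 : r < 1 := Real.exp_lt_one_iff.2 (by linarith)
  have hrne : r ≠ 1 := ne_of_lt hr1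
  have hr0 : (0:ℝ) < 1 - r := by linarith
  have hmn : m ≤ n + 1 := by
    rw [hm, Nat.ceil_le]; push_cast; linarith
  have hpow : r ^ (n + 1 - m) * r ^ m = r ^ (n + 1) := pow_sub_mul_pow r hmn
  have hsum : ∑ i ∈ Finset.Icc m n, Real.exp (-(A n) * ((i:ℝ) - β n))
      = Real.exp (A n * β n) * ((r ^ (n+1) - r ^ m) / (r - 1)) := by
    rw [← Finset.Ico_add_one_right_eq_Icc, ← geom_sum_Ico hrne hmn, Finset.mul_sum]
    refine Finset.sum_congr rfl fun i _ => ?_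
    rw [hr, ← Real.exp_nat_mul, ← Real.exp_add]
    congr 1
    ring
  have hexpm : Real.exp (-(A n) * ((m:ℝ) - β n)) = Real.exp (A n * β n) * r ^ m := by
    rw [hr, ← Real.exp_nat_mul, ← Real.exp_add]
    congr 1
    ring
  have hrne' : r - 1 ≠ 0 := sub_ne_zero.2 hrne
  rw [hexpm, hsum, ← hpow]
  field_simp [hrne']
  ring


/-- With `b_n² = n/log n + n log log n/(log n)²`, for fixed `λ, c > 0` and `h ≥ 0`,
`(log n)²/n · ∑_{i ≤ n, i − c b_n² ≥ h b_n²/log n} exp(−(λ/c)((log n)²/n)(i − c b_n²))`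
converges to `(c/λ) e^{−λh/c}`. -/
theorem stmt_4 (lam c h : ℝ) (hlam : 0 < lam) (hc : 0 < c) (hh : 0 ≤ h)
    (bsq : ℕ → ℝ)
    (hdef : ∀ n : ℕ, 2 ≤ n →
      bsq n = (n : ℝ) / Real.log n + (n : ℝ) * Real.log (Real.log n) / (Real.log n) ^ 2) :
    Tendsto (fun n : ℕ =>
        (Real.log n) ^ 2 / n *
          ∑ i ∈ (Finset.range (n + 1)).filter
              (fun i : ℕ => h * bsq n / Real.log n ≤ (i : ℝ) - c * bsq n),
            Real.exp (-(lam / c) * ((Real.log n) ^ 2 / n) * ((i : ℝ) - c * bsq n)))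
      atTop (nhds (c / lam * Real.exp (-lam * h / c))) := by
  have hlog : Tendsto (fun n : ℕ => Real.log n) atTop atTop :=
    Real.tendsto_log_atTop.comp tendsto_natCast_atTop_atTop
  have hloglog : Tendsto (fun n : ℕ => Real.log (Real.log n) / Real.log n) atTop (nhds 0) := by
    have l1 : Tendsto (fun x : ℝ => Real.log x / x) atTop (nhds 0) := by
      simpa using Real.tendsto_pow_log_div_mul_add_atTop 1 0 1 one_ne_zero
    exact l1.comp hlog
  have hev : ∀ᶠ n : ℕ in atTop, 2 ≤ n ∧ 1 ≤ Real.log n :=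
    (eventually_ge_atTop 2).and (hlog.eventually_ge_atTop 1)
  set A : ℕ → ℝ := fun n => lam / c * ((Real.log n) ^ 2 / n) with hAdef
  set T : ℕ → ℝ := fun n => c * bsq n + h * bsq n / Real.log n with hTdef
  clear_value A T
  have hK : Tendsto (fun n : ℕ => bsq n * Real.log n / n) atTop (nhds 1) := by
    have h1 : Tendsto (fun n : ℕ => 1 + Real.log (Real.log n) / Real.log n) atTop (nhds 1) := by
      simpa using hloglog.const_add 1
    refine h1.congr' ?_
    filter_upwards [hev] with n ⟨h2, h1'⟩
    have hl0 : (0:ℝ) < Real.log n := by linarith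
    have hn0 : (0:ℝ) < n := Nat.cast_pos.2 (by omega)
    rw [hdef n h2]
    field_simp
  have hbsq0 : ∀ᶠ n : ℕ in atTop, 0 ≤ bsq n := by
    filter_upwards [hev] with n ⟨h2, h1'⟩
    have hl0 : (0:ℝ) < Real.log n := by linarith
    have hll : 0 ≤ Real.log (Real.log n) := Real.log_nonneg h1'
    have hn0 : (0:ℝ) ≤ n := Nat.cast_nonneg n
    rw [hdef n h2]
    have : 0 ≤ (n:ℝ) / Real.log n := div_nonneg hn0 hl0.le
    have : 0 ≤ (n:ℝ) * Real.log (Real.log n) / (Real.log n)^2 := by positivity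
    linarith [div_nonneg hn0 hl0.le]
  have hA0 : ∀ᶠ n : ℕ in atTop, 0 < A n := by
    filter_upwards [hev] with n ⟨h2, h1'⟩
    have hl0 : (0:ℝ) < Real.log n := by linarith
    have hn0 : (0:ℝ) < n := Nat.cast_pos.2 (by omega)
    simp only [hAdef]
    exact mul_pos (div_pos hlam hc) (div_pos (by positivity) hn0)
  have hA : Tendsto A atTop (nhds 0) := by
    have l2 : Tendsto (fun x : ℝ => (Real.log x)^2 / x) atTop (nhds 0) := by
      simpa using Real.tendsto_pow_log_div_mul_add_atTop 1 0 2 one_ne_zero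
    have := (l2.comp tendsto_natCast_atTop_atTop).const_mul (lam / c)
    rw [hAdef]
    simpa using this
  have hT0 : ∀ᶠ n : ℕ in atTop, 0 ≤ T n := by
    filter_upwards [hev, hbsq0] with n ⟨h2, h1'⟩ hb
    have hl0 : (0:ℝ) < Real.log n := by linarith
    have : 0 ≤ h * bsq n / Real.log n := by positivity
    simp only [hTdef]
    nlinarith
  have hTβ : ∀ᶠ n : ℕ in atTop, c * bsq n ≤ T n := by
    filter_upwards [hev, hbsq0] with n ⟨h2, h1'⟩ hb
    have hl0 : (0:ℝ) < Real.log n := by linarith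
    have : 0 ≤ h * bsq n / Real.log n := by positivity
    simp only [hTdef]
    linarith
  have hBn : Tendsto (fun n : ℕ => bsq n / n) atTop (nhds 0) := by
    have := hK.mul hlog.inv_tendsto_atTop
    rw [mul_zero] at this
    refine this.congr' ?_
    filter_upwards [hev] with n ⟨h2, h1'⟩
    have hl0 : Real.log n ≠ 0 := by linarith
    simp only [Pi.inv_apply]
    field_simp
  have hToverN : Tendsto (fun n : ℕ => T n / n) atTop (nhds 0) := by
    have := (hBn.const_mul c).add ((hBn.mul hlog.inv_tendsto_atTop).const_mul h)
    norm_num at this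
    refine this.congr' ?_
    filter_upwards [] with n
    simp only [hTdef]
    ring
  have hTn : ∀ᶠ n : ℕ in atTop, T n + 1 ≤ (n : ℝ) := by
    have hhalf : ∀ᶠ n : ℕ in atTop, T n / n < 1/2 :=
      hToverN.eventually_lt_const (by norm_num)
    filter_upwards [hev, hhalf] with n ⟨h2, h1'⟩ hh'
    have hn0 : (0:ℝ) < n := Nat.cast_pos.2 (by omega)
    have hn2 : (2:ℝ) ≤ n := by exact_mod_cast h2
    have hTlt : T n < (n:ℝ) / 2 := by
      rw [div_lt_iff₀ hn0] at hh'
      linarith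
    linarith only [hTlt, hn2]
  have htail : Tendsto (fun n : ℕ => A n * ((n : ℝ) - T n)) atTop atTop := by
    have hlog2 : Tendsto (fun n : ℕ => lam / c * (Real.log n)^2) atTop atTop :=
      Tendsto.const_mul_atTop (div_pos hlam hc) ((tendsto_pow_atTop two_ne_zero).comp hlog)
    have hone : Tendsto (fun n : ℕ => 1 - T n / n) atTop (nhds 1) := by
      have := (tendsto_const_nhds (x := (1:ℝ)) (f := (atTop : Filter ℕ))).sub hToverN
      simpa using this
    have := Tendsto.atTop_mul_pos one_pos hlog2 hone
    refine this.congr' ?_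
    filter_upwards [hev] with n ⟨h2, h1'⟩
    have hn0 : (0:ℝ) < n := Nat.cast_pos.2 (by omega)
    simp only [hAdef]
    field_simp
  have hd : Tendsto (fun n : ℕ => A n * (T n - c * bsq n)) atTop (nhds (lam / c * h)) := by
    have := hK.const_mul (lam / c * h)
    rw [mul_one] at this
    refine this.congr' ?_
    filter_upwards [hev] with n ⟨h2, h1'⟩
    have hl0 : Real.log n ≠ 0 := by linarith
    have hn0 : (n:ℝ) ≠ 0 := Nat.cast_ne_zero.2 (by omega)
    simp only [hAdef, hTdef]
    field_simp
    ring
  have main := aux_main A T (fun n => c * bsq n) (lam / c * h) hA0 hA hT0 hTβ hTn htail hd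
  have final := main.const_mul (c / lam)
  rw [show -(lam / c * h) = -lam * h / c by ring] at final
  refine final.congr' ?_
  filter_upwards [hev] with n ⟨h2, h1'⟩
  have hset : (Finset.range (n + 1)).filter
      (fun i : ℕ => h * bsq n / Real.log n ≤ (i : ℝ) - c * bsq n) = Finset.Icc ⌈T n⌉₊ n := by
    ext i
    simp only [Finset.mem_filter, Finset.mem_range, Finset.mem_Icc, Nat.lt_succ_iff, Nat.ceil_le,
      hTdef]
    constructor
    · rintro ⟨hi, hcond⟩
      exact ⟨by linarith, hi⟩
    · rintro ⟨hcond, hi⟩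
      exact ⟨hi, by linarith⟩
  rw [hset]
  have hexp : ∀ i : ℕ, -(A n) * ((i:ℝ) - c * bsq n)
      = -(lam / c) * ((Real.log n)^2 / n) * ((i:ℝ) - c * bsq n) := fun i => by
    simp only [hAdef]; ring
  simp only [hexp]
  simp only [hAdef]
  rw [← mul_assoc]
  congr 1
  field_simp
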